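/- Any complete set of two-qubit product rays contains exactly one all-north ray: every orthonormal basis of ℂ² ⊗ ℂ² consisting of four product vectors contains exactly one all-north element. -/

import Mathlib

open scoped InnerProductSpace
open MeasureTheory

noncomputable section

abbrev Qubit : Type := EuclideanSpace ℂ (Fin 2)
abbrev NQubit (n : ℕ) : Type := EuclideanSpace ℂ (Fin n → Fin 2)

/-- The product vector `ψ₁ ⊗ ⋯ ⊗ ψₙ` in `(ℂ²)^{⊗n}`, modelled concretely as
`EuclideanSpace ℂ (Fin n → Fin 2)`; its inner products satisfy
`⟨tens ψ, tens χ⟩ = ∏ j, ⟨ψ j, χ j⟩`. -/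
noncomputable def tens {n : ℕ} (ψ : Fin n → Qubit) : NQubit n :=
  WithLp.toLp 2 (fun f => ∏ j, ψ j (f j))

/-- A vector of `(ℂ²)^{⊗n}` is a product vector if it is of the form `ψ₁ ⊗ ⋯ ⊗ ψₙ`. -/
def IsProduct {n : ℕ} (v : NQubit n) : Prop := ∃ ψ : Fin n → Qubit, v = tens ψ

/-- A finite set of vectors forming an orthonormal basis of `H`. -/
def IsONBasis {H : Type*} [NormedAddCommGroup H] [InnerProductSpace ℂ H]
    (B : Finset H) : Prop :=
  Orthonormal ℂ (fun v : B => (v : H)) ∧ Submodule.span ℂ (B : Set H) = ⊤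

/-- A KS-colouring of a set `S` of unit vectors: a `{0,1}`-valued map (modelled as a
predicate, `c v` meaning value `1`) such that every orthonormal basis contained in `S`
has exactly one element of value `1`, and no two mutually orthogonal elements of `S`
both have value `1`. -/
def IsKSColouring {H : Type*} [NormedAddCommGroup H] [InnerProductSpace ℂ H]
    (S : Set H) (c : H → Prop) : Prop :=
  (∀ B : Finset H, ↑B ⊆ S → IsONBasis B → ∃! v, v ∈ B ∧ c v) ∧
  (∀ ψ ∈ S, ∀ χ ∈ S, ⟪ψ, χ⟫_ℂ = 0 → ¬(c ψ ∧ c χ))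

/-- First coordinate of the Bloch vector of a qubit vector. -/
def blochX (ψ : Qubit) : ℝ := 2 * ((starRingEnd ℂ) (ψ 0) * ψ 1).re
/-- Second coordinate of the Bloch vector of a qubit vector. -/
def blochY (ψ : Qubit) : ℝ := 2 * ((starRingEnd ℂ) (ψ 0) * ψ 1).im
/-- Third coordinate of the Bloch vector of a qubit vector. -/
def blochZ (ψ : Qubit) : ℝ := Complex.normSq (ψ 0) - Complex.normSq (ψ 1)

/-- A qubit unit vector is north if its Bloch vector `(x,y,z)` satisfies `z > 0`, or
`z = 0 ∧ y < 0`, or `z = 0 ∧ y = 0 ∧ x > 0`. -/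
def IsNorth (ψ : Qubit) : Prop :=
  0 < blochZ ψ ∨ (blochZ ψ = 0 ∧ blochY ψ < 0) ∨
    (blochZ ψ = 0 ∧ blochY ψ = 0 ∧ 0 < blochX ψ)

/-- An `n`-qubit product vector is all-north if it factors as a product of north
qubit vectors. -/
def AllNorth {n : ℕ} (v : NQubit n) : Prop :=
  ∃ ψ : Fin n → Qubit, v = tens ψ ∧ ∀ j, IsNorth (ψ j)
/-! ### Auxiliary lemmas -/

lemma inner_tens {n : ℕ} (ψ χ : Fin n → Qubit) :
    ⟪tens ψ, tens χ⟫_ℂ = ∏ j, ⟪ψ j, χ j⟫_ℂ := by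
  simp only [PiLp.inner_apply, RCLike.inner_apply, tens]
  rw [Finset.prod_univ_sum]
  rw [← Fintype.piFinset_univ]
  refine Finset.sum_congr rfl fun f _ => ?_
  rw [map_prod, ← Finset.prod_mul_distrib]

lemma qubit_ne_zero_iff (ψ : Qubit) : ψ ≠ 0 ↔ (ψ 0 ≠ 0 ∨ ψ 1 ≠ 0) := by
  constructor
  · intro h
    by_contra hc
    push_neg at hc
    apply h
    ext i
    fin_cases i <;> simp [hc.1, hc.2]
  · rintro (h | h) hc <;> simp [hc] at h

lemma conj_mul_self' (c : ℂ) : (starRingEnd ℂ) c * c = (Complex.normSq c : ℂ) :=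
  (Complex.normSq_eq_conj_mul_self).symm

lemma smul_entry (c : ℂ) (ψ : Qubit) (i : Fin 2) : (c • ψ) i = c * ψ i := rfl

lemma bloch_smul (ψ : Qubit) (c : ℂ) :
    blochX (c • ψ) = Complex.normSq c * blochX ψ ∧
    blochY (c • ψ) = Complex.normSq c * blochY ψ ∧
    blochZ (c • ψ) = Complex.normSq c * blochZ ψ := by
  have key : (starRingEnd ℂ) ((c • ψ) 0) * (c • ψ) 1
      = (Complex.normSq c : ℂ) * ((starRingEnd ℂ) (ψ 0) * ψ 1) := by
    simp only [smul_entry, map_mul]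
    rw [← conj_mul_self']; ring
  refine ⟨?_, ?_, ?_⟩
  · simp only [blochX, key, Complex.re_ofReal_mul]; ring
  · simp only [blochY, key, Complex.im_ofReal_mul]; ring
  · simp only [blochZ, smul_entry, Complex.normSq_mul]; ring

lemma isNorth_smul (ψ : Qubit) (c : ℂ) (hc : c ≠ 0) : IsNorth (c • ψ) ↔ IsNorth ψ := by
  obtain ⟨hx, hy, hz⟩ := bloch_smul ψ c
  have hpos : 0 < Complex.normSq c := Complex.normSq_pos.2 hc
  have e1 : ∀ x : ℝ, 0 < Complex.normSq c * x ↔ 0 < x :=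
    fun x => ⟨fun h => by nlinarith, fun h => mul_pos hpos h⟩
  have e2 : ∀ x : ℝ, Complex.normSq c * x = 0 ↔ x = 0 :=
    fun x => ⟨fun h => (mul_eq_zero.1 h).resolve_left hpos.ne',
      fun h => by rw [h, mul_zero]⟩
  have e3 : ∀ x : ℝ, Complex.normSq c * x < 0 ↔ x < 0 :=
    fun x => ⟨fun h => by nlinarith, fun h => mul_neg_of_pos_of_neg hpos h⟩
  unfold IsNorth
  simp only [hx, hy, hz, e1, e2, e3]

lemma orth_struct (ψ χ : Qubit) (h : ⟪ψ, χ⟫_ℂ = 0) (hψ : ψ ≠ 0) :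
    ∃ c : ℂ, χ 0 = -c * (starRingEnd ℂ) (ψ 1) ∧ χ 1 = c * (starRingEnd ℂ) (ψ 0) := by
  have hin : (starRingEnd ℂ) (ψ 0) * χ 0 + (starRingEnd ℂ) (ψ 1) * χ 1 = 0 := by
    have h' : χ 0 * (starRingEnd ℂ) (ψ 0) + χ 1 * (starRingEnd ℂ) (ψ 1) = 0 := by
      simpa [PiLp.inner_apply, RCLike.inner_apply, Fin.sum_univ_two] using h
    linear_combination h'
  rcases (qubit_ne_zero_iff ψ).1 hψ with h0 | h1
  · have ha : (starRingEnd ℂ) (ψ 0) ≠ 0 := by simpa using h0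
    refine ⟨χ 1 / (starRingEnd ℂ) (ψ 0), ?_, ?_⟩
    · field_simp
      linear_combination hin
    · field_simp
  · have ha : (starRingEnd ℂ) (ψ 1) ≠ 0 := by simpa using h1
    refine ⟨- χ 0 / (starRingEnd ℂ) (ψ 1), ?_, ?_⟩
    · field_simp
    · field_simp
      linear_combination hin

lemma north_antipodal {x y z k : ℝ} (hk : 0 < k) (h : ¬(z = 0 ∧ y = 0 ∧ x = 0)) :
    (0 < z ∨ (z = 0 ∧ y < 0) ∨ (z = 0 ∧ y = 0 ∧ 0 < x)) ↔
    ¬(0 < -(k*z) ∨ (-(k*z) = 0 ∧ -(k*y) < 0) ∨ (-(k*z) = 0 ∧ -(k*y) = 0 ∧ 0 < -(k*x))) := by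
  have hz0 : -(k*z) = 0 ↔ z = 0 := by
    constructor
    · intro hh; nlinarith [mul_self_nonneg z]
    · intro hh; rw [hh]; ring
  have hzp : 0 < -(k*z) ↔ z < 0 := ⟨fun hh => by nlinarith, fun hh => by nlinarith⟩
  have hyn : -(k*y) < 0 ↔ 0 < y := ⟨fun hh => by nlinarith, fun hh => by nlinarith⟩
  have hyz : -(k*y) = 0 ↔ y = 0 := by
    constructor
    · intro hh; nlinarith [mul_self_nonneg y]
    · intro hh; rw [hh]; ring
  have hxp : 0 < -(k*x) ↔ x < 0 := ⟨fun hh => by nlinarith, fun hh => by nlinarith⟩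
  rw [hz0, hzp, hyn, hyz, hxp]
  push_neg at h ⊢
  constructor
  · rintro (h1 | ⟨h1, h2⟩ | ⟨h1, h2, h3⟩) <;>
      exact ⟨by linarith, fun hz => by linarith, fun hz hy => by linarith⟩
  · rintro ⟨h1, h2, h3⟩
    rcases lt_trichotomy z 0 with hz | hz | hz
    · linarith
    · rcases lt_trichotomy y 0 with hy | hy | hy
      · exact Or.inr (Or.inl ⟨hz, hy⟩)
      · refine Or.inr (Or.inr ⟨hz, hy, ?_⟩)
        have h4 := h3 hz hy
        have h5 := h hz hy
        exact lt_of_le_of_ne h4 (Ne.symm h5)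
      · exact absurd (h2 hz) (not_le.2 hy)
    · exact Or.inl hz

lemma bloch_nonzero {ψ : Qubit} (hψ : ψ ≠ 0) :
    ¬(blochZ ψ = 0 ∧ blochY ψ = 0 ∧ blochX ψ = 0) := by
  rintro ⟨hz, hy, hx⟩
  have hw : (starRingEnd ℂ) (ψ 0) * ψ 1 = 0 := by
    apply Complex.ext
    · simpa [blochX] using hx
    · simpa [blochY] using hy
  have h01 : ψ 0 = 0 ∨ ψ 1 = 0 := by
    rcases mul_eq_zero.1 hw with h | h
    · exact Or.inl (by simpa using h)
    · exact Or.inr h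
  have hzz : Complex.normSq (ψ 0) = Complex.normSq (ψ 1) := by
    unfold blochZ at hz; linarith
  have hb : ψ 0 = 0 ∧ ψ 1 = 0 := by
    rcases h01 with h | h
    · rw [h] at hzz
      simp only [map_zero] at hzz
      exact ⟨h, by simpa using (Complex.normSq_eq_zero.1 hzz.symm)⟩
    · rw [h] at hzz
      simp only [map_zero] at hzz
      exact ⟨by simpa using (Complex.normSq_eq_zero.1 hzz), h⟩
  apply hψ
  ext i
  fin_cases i <;> simp [hb.1, hb.2]

lemma north_xor {ψ χ : Qubit} (hψ : ψ ≠ 0) (hχ : χ ≠ 0) (h : ⟪ψ, χ⟫_ℂ = 0) :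
    IsNorth ψ ↔ ¬ IsNorth χ := by
  obtain ⟨c, hc0, hc1⟩ := orth_struct ψ χ h hψ
  have hc : c ≠ 0 := by
    rintro rfl
    apply hχ
    ext i
    fin_cases i <;> simp [hc0, hc1]
  have hpos : 0 < Complex.normSq c := Complex.normSq_pos.2 hc
  have key : (starRingEnd ℂ) (χ 0) * χ 1
      = ((-(Complex.normSq c) : ℝ) : ℂ) * ((starRingEnd ℂ) (ψ 0) * ψ 1) := by
    rw [hc0, hc1]
    simp only [map_mul, map_neg, Complex.conj_conj]
    rw [show ((-(Complex.normSq c) : ℝ) : ℂ) = -((Complex.normSq c : ℝ) : ℂ) by push_cast; ring,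
      ← conj_mul_self']
    ring
  have hbx : blochX χ = -(Complex.normSq c * blochX ψ) := by
    simp only [blochX, key, Complex.re_ofReal_mul]; ring
  have hby : blochY χ = -(Complex.normSq c * blochY ψ) := by
    simp only [blochY, key, Complex.im_ofReal_mul]; ring
  have hbz : blochZ χ = -(Complex.normSq c * blochZ ψ) := by
    simp only [blochZ, hc0, hc1, Complex.normSq_mul, Complex.normSq_neg,
      Complex.normSq_conj]
    ring
  have := north_antipodal (k := Complex.normSq c) (x := blochX ψ) (y := blochY ψ)
    (z := blochZ ψ) hpos (bloch_nonzero hψ)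
  unfold IsNorth
  rw [hbx, hby, hbz]
  exact this

lemma tens_two_apply (ψ : Fin 2 → Qubit) (f : Fin 2 → Fin 2) :
    tens ψ f = ψ 0 (f 0) * ψ 1 (f 1) := by
  simp [tens, Fin.prod_univ_two]

lemma tens_zero {n : ℕ} (ψ : Fin n → Qubit) (j : Fin n) (h : ψ j = 0) :
    tens ψ = 0 := by
  ext f
  show ∏ k, ψ k (f k) = 0
  exact Finset.prod_eq_zero (Finset.mem_univ j) (by rw [h]; rfl)

lemma factor_ne_zero {n : ℕ} {ψ : Fin n → Qubit} (h : tens ψ ≠ 0) (j : Fin n) :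
    ψ j ≠ 0 := fun hj => h (tens_zero ψ j hj)

lemma tens_factors {ψ φ : Fin 2 → Qubit} (heq : tens ψ = tens φ) (hne : tens φ ≠ 0) :
    ∀ j, ∃ c : ℂ, c ≠ 0 ∧ ψ j = c • φ j := by
  have hex : ∃ f, tens φ f ≠ 0 := by
    by_contra hc
    push_neg at hc
    exact hne (by ext f; exact hc f)
  obtain ⟨f, hf⟩ := hex
  rw [tens_two_apply] at hf
  have h0 : φ 0 (f 0) ≠ 0 := fun h => hf (by rw [h, zero_mul])
  have h1 : φ 1 (f 1) ≠ 0 := fun h => hf (by rw [h, mul_zero])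
  have hval : ∀ g : Fin 2 → Fin 2, ψ 0 (g 0) * ψ 1 (g 1) = φ 0 (g 0) * φ 1 (g 1) := by
    intro g
    rw [← tens_two_apply, ← tens_two_apply, heq]
  have hψ0 : ψ 0 (f 0) ≠ 0 := by
    intro h
    apply hf
    rw [← hval f, h, zero_mul]
  have hψ1 : ψ 1 (f 1) ≠ 0 := by
    intro h
    apply hf
    rw [← hval f, h, mul_zero]
  intro j
  fin_cases j
  · refine ⟨φ 1 (f 1) / ψ 1 (f 1), div_ne_zero h1 hψ1, ?_⟩
    ext a
    have := hval ![a, f 1]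
    simp only [Matrix.cons_val_zero, Matrix.cons_val_one, Matrix.head_cons] at this
    show ψ 0 a = ((φ 1 (f 1) / ψ 1 (f 1)) • φ 0) a
    rw [smul_entry]
    field_simp
    linear_combination this
  · refine ⟨φ 0 (f 0) / ψ 0 (f 0), div_ne_zero h0 hψ0, ?_⟩
    ext b
    have := hval ![f 0, b]
    simp only [Matrix.cons_val_zero, Matrix.cons_val_one, Matrix.head_cons] at this
    show ψ 1 b = ((φ 0 (f 0) / ψ 0 (f 0)) • φ 1) b
    rw [smul_entry]
    field_simp
    linear_combination this

lemma allNorth_iff {ψ : Fin 2 → Qubit} (h : tens ψ ≠ 0) :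
    AllNorth (tens ψ) ↔ ∀ j, IsNorth (ψ j) := by
  constructor
  · rintro ⟨φ, hφ, hn⟩
    have hφne : tens φ ≠ 0 := hφ ▸ h
    intro j
    obtain ⟨c, hc, hcj⟩ := tens_factors hφ hφne j
    rw [hcj, isNorth_smul _ _ hc]
    exact hn j
  · intro hn
    exact ⟨ψ, rfl, hn⟩

/-- every orthonormal basis of `ℂ² ⊗ ℂ²` consisting of four product
vectors contains exactly one all-north element. -/
theorem two_qubit_product_basis_exactly_one_all_north
    (B : Finset (NQubit 2)) (hcard : B.card = 4) (hB : IsONBasis B)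
    (hprod : ∀ v ∈ B, IsProduct v) :
    ∃! v, v ∈ B ∧ AllNorth v := by
  classical
  -- a fixed factorization of each element of `B`
  set Ψ : NQubit 2 → (Fin 2 → Qubit) :=
    fun v => if h : IsProduct v then h.choose else 0 with hΨdef
  have hΨ : ∀ v ∈ B, v = tens (Ψ v) := by
    intro v hv
    have h := hprod v hv
    simp only [hΨdef, dif_pos h]
    exact h.choose_spec
  have hnorm : ∀ v ∈ B, v ≠ 0 := by
    intro v hv h0
    have h1 : ‖v‖ = 1 := hB.1.1 ⟨v, hv⟩
    rw [h0] at h1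
    simp at h1
  have horth : ∀ v ∈ B, ∀ w ∈ B, v ≠ w → ⟪v, w⟫_ℂ = 0 := by
    intro v hv w hw hvw
    exact hB.1.2 (i := ⟨v, hv⟩) (j := ⟨w, hw⟩) (by simpa [Subtype.ext_iff] using hvw)
  -- the colouring map
  set g : B → Bool × Bool :=
    fun v => (decide (IsNorth (Ψ (v : NQubit 2) 0)), decide (IsNorth (Ψ (v : NQubit 2) 1)))
    with hgdef
  have hginj : Function.Injective g := by
    rintro ⟨v, hv⟩ ⟨w, hw⟩ hgvw
    by_contra hne
    have hvw : v ≠ w := by simpa [Subtype.ext_iff] using hne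
    have hio := horth v hv w hw hvw
    rw [hΨ v hv, hΨ w hw, inner_tens, Fin.prod_univ_two] at hio
    have hvne : tens (Ψ v) ≠ 0 := (hΨ v hv) ▸ hnorm v hv
    have hwne : tens (Ψ w) ≠ 0 := (hΨ w hw) ▸ hnorm w hw
    simp only [hgdef, Prod.mk.injEq, decide_eq_decide] at hgvw
    rcases mul_eq_zero.1 hio with h | h
    · have := north_xor (factor_ne_zero hvne 0) (factor_ne_zero hwne 0) h
      tauto
    · have := north_xor (factor_ne_zero hvne 1) (factor_ne_zero hwne 1) h
      tauto
  have hcards : Fintype.card B = Fintype.card (Bool × Bool) := by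
    simp [Fintype.card_coe, hcard]
  have hgbij : Function.Bijective g :=
    (Fintype.bijective_iff_injective_and_card g).2 ⟨hginj, hcards⟩
  obtain ⟨⟨v, hv⟩, hgv0⟩ := hgbij.2 (true, true)
  have hvne : tens (Ψ v) ≠ 0 := (hΨ v hv) ▸ hnorm v hv
  have hgv := hgv0
  simp only [hgdef, Prod.mk.injEq, decide_eq_true_eq] at hgv
  refine ⟨v, ⟨hv, ?_⟩, ?_⟩
  · rw [hΨ v hv, allNorth_iff hvne]
    intro j
    fin_cases j
    · exact hgv.1
    · exact hgv.2
  · rintro w ⟨hw, hwn⟩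
    have hwne : tens (Ψ w) ≠ 0 := (hΨ w hw) ▸ hnorm w hw
    rw [hΨ w hw, allNorth_iff hwne] at hwn
    have : g ⟨w, hw⟩ = (true, true) := by
      simp only [hgdef, Prod.mk.injEq, decide_eq_true_eq]
      exact ⟨hwn 0, hwn 1⟩
    have heqg := hginj (a₁ := ⟨w, hw⟩) (a₂ := ⟨v, hv⟩) (this.trans hgv0.symm)
    simpa [Subtype.ext_iff] using heqg

end
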